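/- arXiv:2108.02024 — 5 statements merged into one kernel-verified Lean document; each statement's English description precedes it below -/
import Mathlib

section
/- Let k, e, u, f, t be positive integers with f ∣ e + u, let w = lcm(e, u), and suppose N := k·w·t − (e + u)/f is a positive integer. Then e and u divide w·t·f·N, and in ℚ: k / N = 1 / (w·t) + 1 / (w·t·f·N / e) + 1 / (w·t·f·N / u). -/
theorem stmt_9 (k e u f t : ℕ) (hk : 0 < k) (he : 0 < e) (hu : 0 < u)
    (hf : 0 < f) (ht : 0 < t) (hfd : f ∣ e + u) (w : ℕ) (hw : w = Nat.lcm e u)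
    (N : ℕ) (hN : N = k * w * t - (e + u) / f) (hpos : 0 < N) :
    e ∣ w * t * f * N ∧ u ∣ w * t * f * N ∧
      (k : ℚ) / (N : ℚ) =
        1 / ((w * t : ℕ) : ℚ) + 1 / ((w * t * f * N / e : ℕ) : ℚ)
          + 1 / ((w * t * f * N / u : ℕ) : ℚ) := by
  have hew : e ∣ w := hw ▸ Nat.dvd_lcm_left e u
  have huw : u ∣ w := hw ▸ Nat.dvd_lcm_right e u
  have he' : e ∣ w * t * f * N := (hew.mul_right t).mul_right f |>.mul_right N
  have hu' : u ∣ w * t * f * N := (huw.mul_right t).mul_right f |>.mul_right N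
  refine ⟨he', hu', ?_⟩
  have hwpos : 0 < w := hw ▸ Nat.pos_of_ne_zero (Nat.lcm_ne_zero he.ne' hu.ne')
  obtain ⟨c, hc⟩ := hfd
  have hcdiv : (e + u) / f = c := by rw [hc, Nat.mul_div_cancel_left _ hf]
  have hsum : N + c = k * w * t := by omega
  have hkey : f * N + (e + u) = k * w * t * f := by rw [hc, ← hsum]; ring
  have hkeyQ : (f : ℚ) * N + (e + u) = k * w * t * f := by exact_mod_cast hkey
  rw [Nat.cast_div he' (by exact_mod_cast he.ne'),
    Nat.cast_div hu' (by exact_mod_cast hu.ne')]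
  have hNQ : (N : ℚ) ≠ 0 := by exact_mod_cast hpos.ne'
  have heQ : (e : ℚ) ≠ 0 := by exact_mod_cast he.ne'
  have huQ : (u : ℚ) ≠ 0 := by exact_mod_cast hu.ne'
  have hfQ : (f : ℚ) ≠ 0 := by exact_mod_cast hf.ne'
  have hwQ : (w : ℚ) ≠ 0 := by exact_mod_cast hwpos.ne'
  have htQ : (t : ℚ) ≠ 0 := by exact_mod_cast ht.ne'
  push_cast
  field_simp
  linear_combination (-1 : ℚ) * hkeyQ
end

section
/- Let k, c, d, t be positive integers, let w = lcm(c, d), and suppose N := (k·w − c)·t − d is a positive integer. Then in ℚ: k / N = 1 / ((w / c)·N) + 1 / (w·t) + 1 / ((w·t / d)·N). -/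
theorem stmt_10 (k c d t : ℕ) (hk : 0 < k) (hc : 0 < c) (hd : 0 < d) (ht : 0 < t)
    (w : ℕ) (hw : w = Nat.lcm c d) (N : ℕ) (hN : N = (k * w - c) * t - d)
    (hpos : 0 < N) :
    (k : ℚ) / (N : ℚ) =
      1 / (((w / c) * N : ℕ) : ℚ) + 1 / ((w * t : ℕ) : ℚ)
        + 1 / (((w * t / d) * N : ℕ) : ℚ) := by
  obtain ⟨a, ha⟩ : c ∣ w := hw ▸ Nat.dvd_lcm_left c d
  obtain ⟨b, hb⟩ : d ∣ w := hw ▸ Nat.dvd_lcm_right c d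
  have hw0 : 0 < w := hw ▸ Nat.pos_of_ne_zero (Nat.lcm_ne_zero hc.ne' hd.ne')
  have ha0 : 0 < a := Nat.pos_of_ne_zero (by rintro rfl; simp [ha] at hw0)
  have hb0 : 0 < b := Nat.pos_of_ne_zero (by rintro rfl; simp [hb] at hw0)
  have h1 : w / c = a := by rw [ha, Nat.mul_div_cancel_left _ hc]
  have h2 : w * t / d = b * t := by rw [hb, mul_assoc, Nat.mul_div_cancel_left _ hd]
  have hXY : c * t ≤ k * w * t := by
    have h4 : c ≤ k * w := le_trans (Nat.le_of_dvd hw0 ⟨a, ha⟩)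
      (Nat.le_mul_of_pos_left w hk)
    exact Nat.mul_le_mul_right t h4
  have hkey : k * w * t = N + c * t + d := by
    have h3 : N = k * w * t - c * t - d := by rw [hN, Nat.sub_mul]
    revert h3 hXY hpos
    generalize k * w * t = X
    generalize c * t = Y
    intro hpos hXY h3
    omega
  have hQ : (k : ℚ) * w * t = N + c * t + d := by exact_mod_cast hkey
  have haQ : (w : ℚ) = c * a := by exact_mod_cast ha
  have hbQ : (w : ℚ) = d * b := by exact_mod_cast hb
  rw [h1, h2]
  push_cast
  have hN0 : (N : ℚ) ≠ 0 := by positivity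
  have ha0' : (a : ℚ) ≠ 0 := by positivity
  have hb0' : (b : ℚ) ≠ 0 := by positivity
  have hw0' : (w : ℚ) ≠ 0 := by positivity
  have ht0' : (t : ℚ) ≠ 0 := by positivity
  have e1 : (1:ℚ)/(a*N) = (c*t)/(w*t*N) := by
    rw [haQ]; field_simp
  have e2 : (1:ℚ)/(w*t) = (N:ℚ)/(w*t*N) := by
    field_simp
  have e3 : (1:ℚ)/(b*t*N) = (d:ℚ)/(w*t*N) := by
    rw [hbQ]; field_simp
  rw [e1, e2, e3, ← add_div, ← add_div]
  have : (c:ℚ)*t + N + d = k*w*t := by linarith [hQ]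
  rw [this]
  field_simp
end

section
/- Let a, ω, t, b, c be positive integers with c > b, set k = c − b and P = (a·ω + b)·t, and suppose P > 1 and N := k·P − (a·ω + c) is a positive integer. Then in ℚ: k / N = 1 / (P − 1) + 1 / (N·t) + 1 / (N·(P − 1)·t). -/
theorem stmt_12 (a ω t b c : ℕ) (ha : 0 < a) (hω : 0 < ω) (ht : 0 < t)
    (hb : 0 < b) (hc : 0 < c) (hcb : c > b) (k : ℕ) (hkdef : k = c - b)
    (P : ℕ) (hP : P = (a * ω + b) * t) (hP1 : 1 < P)
    (N : ℕ) (hN : N = k * P - (a * ω + c)) (hpos : 0 < N) :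
    (k : ℚ) / (N : ℚ) =
      1 / ((P - 1 : ℕ) : ℚ) + 1 / ((N * t : ℕ) : ℚ)
        + 1 / ((N * (P - 1) * t : ℕ) : ℚ) := by
  have hle : a * ω + c ≤ k * P := by omega
  have hP1' : 1 ≤ P := le_of_lt hP1
  have hbc : b ≤ c := le_of_lt hcb
  have hNq : (N : ℚ) = (k : ℚ) * P - ((a : ℚ) * ω + c) := by
    rw [hN]; push_cast [Nat.cast_sub hle]; ring
  have hkq : (k : ℚ) = (c : ℚ) - b := by
    rw [hkdef]; push_cast [Nat.cast_sub hbc]; ring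
  have hPq : (P : ℚ) = ((a : ℚ) * ω + b) * t := by
    rw [hP]; push_cast; ring
  have hkey : (k : ℚ) * ((P : ℚ) - 1) * t = (N : ℚ) * t + P := by
    linear_combination (-(t : ℚ)) * hNq + (-(t : ℚ)) * hkq - hPq
  have hN0 : (N : ℚ) ≠ 0 := by positivity
  have ht0 : (t : ℚ) ≠ 0 := by positivity
  have hPm1 : (P : ℚ) - 1 ≠ 0 := by
    have : (1 : ℚ) < P := by exact_mod_cast hP1
    intro h; nlinarith
  push_cast [Nat.cast_sub hP1']
  field_simp
  linear_combination hkey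
end

section
/- Let a ≥ 2 and b, t, s, v be positive integers, let c₁, …, c_s be positive integers with v > b + cᵢ for every 1 ≤ i ≤ s, and suppose N := a^v·t − (∑_{i=1}^{s} a^{cᵢ} + 1) is a positive integer. Then in ℚ: a^b / N = 1 / (a^{v−b}·t) + ∑_{i=1}^{s} 1 / (a^{v−(b+cᵢ)}·t·N) + 1 / (a^{v−b}·t·N). -/
theorem stmt_14 (a b t s v : ℕ) (ha : 2 ≤ a) (hb : 0 < b) (ht : 0 < t)
    (hs : 0 < s) (hv : 0 < v) (c : ℕ → ℕ)
    (hc : ∀ i < s, 0 < c i ∧ b + c i < v)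
    (N : ℕ) (hN : N = a ^ v * t - (∑ i ∈ Finset.range s, a ^ (c i) + 1))
    (hpos : 0 < N) :
    ((a ^ b : ℕ) : ℚ) / (N : ℚ) =
      1 / ((a ^ (v - b) * t : ℕ) : ℚ)
        + ∑ i ∈ Finset.range s, 1 / ((a ^ (v - (b + c i)) * t * N : ℕ) : ℚ)
        + 1 / ((a ^ (v - b) * t * N : ℕ) : ℚ) := by
  have ha0 : (a : ℚ) ≠ 0 := by positivity
  have ht0 : (t : ℚ) ≠ 0 := Nat.cast_ne_zero.mpr ht.ne'
  have hN0 : (N : ℚ) ≠ 0 := Nat.cast_ne_zero.mpr hpos.ne'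
  have hbv : b ≤ v := by
    have := (hc 0 hs).2
    omega
  have hle : ∑ i ∈ Finset.range s, a ^ (c i) + 1 ≤ a ^ v * t :=
    le_of_lt (Nat.lt_of_sub_pos (hN ▸ hpos))
  have haN : (N : ℚ) = (a:ℚ) ^ v * t - (∑ i ∈ Finset.range s, (a:ℚ) ^ (c i) + 1) := by
    rw [hN, Nat.cast_sub hle]
    push_cast
    ring
  have hsum : ∑ i ∈ Finset.range s, 1 / ((a ^ (v - (b + c i)) * t * N : ℕ) : ℚ)
      = (∑ i ∈ Finset.range s, (a:ℚ) ^ (b + c i)) / ((a:ℚ) ^ v * t * N) := by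
    rw [Finset.sum_div]
    refine Finset.sum_congr rfl fun i hi => ?_
    have hi' := (hc i (Finset.mem_range.mp hi)).2
    have hkey : (a:ℚ) ^ (v - (b + c i)) * (a:ℚ) ^ (b + c i) = (a:ℚ) ^ v := by
      rw [← pow_add, Nat.sub_add_cancel hi'.le]
    push_cast
    rw [div_eq_div_iff (by positivity) (by positivity)]
    rw [← hkey]; ring
  rw [hsum]
  have hkey2 : (a:ℚ) ^ (v - b) * (a:ℚ) ^ b = (a:ℚ) ^ v := by
    rw [← pow_add, Nat.sub_add_cancel hbv]
  have hsum2 : ∑ i ∈ Finset.range s, (a:ℚ) ^ (b + c i)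
      = (a:ℚ) ^ b * ∑ i ∈ Finset.range s, (a:ℚ) ^ (c i) := by
    rw [Finset.mul_sum]
    exact Finset.sum_congr rfl fun i _ => by rw [pow_add]
  push_cast
  rw [hsum2, ← hkey2]
  have hvb0 : (a:ℚ) ^ (v - b) ≠ 0 := by positivity
  field_simp
  rw [haN, ← hkey2]
  ring
end

section
/- Let ω, t be positive integers and set N = 8·(2ω − 1)·t − (4ω − 1) and M = N·(4ω − 1) + 1. Then N is a positive integer, 8·(2ω − 1) divides M (in particular 4 ∣ M and 4·(4ω − 2) ∣ M), and in ℚ: 4 / N = 1 / (M / 4) + 1 / (M / (4·(4ω − 2))) + 1 / (N·(M / 4)). -/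
theorem stmt_17 (ω t : ℕ) (hω : 0 < ω) (ht : 0 < t)
    (N : ℕ) (hN : N = 8 * (2 * ω - 1) * t - (4 * ω - 1))
    (M : ℕ) (hM : M = N * (4 * ω - 1) + 1) :
    0 < N ∧ 8 * (2 * ω - 1) ∣ M ∧ 4 ∣ M ∧ 4 * (4 * ω - 2) ∣ M ∧
      (4 : ℚ) / (N : ℚ) =
        1 / ((M / 4 : ℕ) : ℚ) + 1 / ((M / (4 * (4 * ω - 2)) : ℕ) : ℚ)
          + 1 / ((N * (M / 4) : ℕ) : ℚ) := by
  obtain ⟨w, rfl⟩ : ∃ w, ω = w + 1 := ⟨ω - 1, (Nat.succ_pred_eq_of_pos hω).symm⟩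
  have e1 : 2 * (w + 1) - 1 = 2 * w + 1 := by omega
  have e2 : 4 * (w + 1) - 1 = 4 * w + 3 := by omega
  have e3 : 4 * (4 * (w + 1) - 2) = 8 * (2 * w + 1) := by omega
  simp only [e1, e2] at hN hM ⊢
  rw [e3]
  have hP : (2 * w + 1) * t ≥ 2 * w + 1 := Nat.le_mul_of_pos_right _ ht
  have hQ' : t * (4 * w + 3) ≥ 4 * w + 3 := Nat.le_mul_of_pos_left _ ht
  set Q := t * (4 * w + 3) - (w + 1) with hQdef
  have hQpos : 0 < Q := by omega
  have hassoc : 8 * (2 * w + 1) * t = 8 * ((2 * w + 1) * t) := by ring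
  have hNpos : 0 < N := by rw [hN, hassoc]; omega
  have hsub1 : 4 * w + 3 ≤ 8 * (2 * w + 1) * t := by rw [hassoc]; omega
  have hMQ : M = 8 * (2 * w + 1) * Q := by
    rw [hM, hN, hQdef]
    zify [hsub1, show w + 1 ≤ t * (4 * w + 3) by omega]
    ring
  have hkey : 8 * (2 * w + 1) * Q = N * (4 * w + 3) + 1 := by rw [← hMQ, hM]
  have hd4 : M / 4 = 2 * (2 * w + 1) * Q := by
    rw [hMQ, show 8 * (2 * w + 1) * Q = 4 * (2 * (2 * w + 1) * Q) by ring,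
      Nat.mul_div_cancel_left _ (by norm_num)]
  have hd8 : M / (8 * (2 * w + 1)) = Q := by
    rw [hMQ]; exact Nat.mul_div_cancel_left _ (by positivity)
  refine ⟨hNpos, ⟨Q, by rw [hMQ]⟩, ⟨2 * (2 * w + 1) * Q, by rw [hMQ]; ring⟩,
    ⟨Q, by rw [hMQ]⟩, ?_⟩
  rw [hd4, hd8]
  have hNQ : (N : ℚ) ≠ 0 := Nat.cast_ne_zero.2 hNpos.ne'
  have hQQ : (Q : ℚ) ≠ 0 := Nat.cast_ne_zero.2 hQpos.ne'
  have hc : (8 : ℚ) * (2 * (w : ℚ) + 1) * Q = N * (4 * w + 3) + 1 := by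
    exact_mod_cast congrArg (Nat.cast : ℕ → ℚ) hkey
  have hw' : (2 * (w : ℚ) + 1) ≠ 0 := by positivity
  push_cast
  field_simp
  linear_combination hc
end
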